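/- Let s ≥ 2 and k ≥ 3 be integers and let ∑_{i∈W} a_i x_i + a^0 ∑_{i∉W} x_i ≥ (s+1)a^0 be an (s+1)-inequality of Q(C_{sk}^k) that is valid for Q(C_{sk}^k). Then every root x̃ of this inequality satisfies |x̃| ∈ {s, s+1}; moreover, x̃ ∩ W ≠ ∅ if and only if |x̃| = s (i.e. x̃ is a minimum cover), and in that case x̃ = x^i for every i ∈ x̃ ∩ W. -/

import Mathlib

/-- `Cseg n k i` is the set `C^i = {i, i+1, …, i+k−1} ⊆ ℤ_n`. -/
def Cseg (n k : ℕ) (i : ZMod n) : Finset (ZMod n) :=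
  (Finset.range k).image fun h : ℕ => i + (h : ZMod n)

/-- A cover of the circulant matrix `C_n^k`. -/
def IsCover (n k : ℕ) (x : Finset (ZMod n)) : Prop :=
  ∀ i : ZMod n, (x ∩ Cseg n k i).Nonempty

/-- A minimal cover of `C_n^k`. -/
def IsMinimalCover (n k : ℕ) (x : Finset (ZMod n)) : Prop :=
  IsCover n k x ∧ ∀ y : Finset (ZMod n), y ⊂ x → ¬ IsCover n k y

/-- The covering number `τ(C_n^k)`. -/
noncomputable def coveringNumber (n k : ℕ) : ℕ :=
  sInf {m : ℕ | ∃ x : Finset (ZMod n), IsCover n k x ∧ x.card = m}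

/-- A minimum cover of `C_n^k`. -/
noncomputable def IsMinimumCover (n k : ℕ) (x : Finset (ZMod n)) : Prop :=
  IsCover n k x ∧ x.card = coveringNumber n k

/-- `xcov n k i` is the cover `x^i = {i + h·k : 0 ≤ h ≤ ⌈n/k⌉ − 1}`. -/
def xcov (n k : ℕ) (i : ZMod n) : Finset (ZMod n) :=
  (Finset.range ((n + k - 1) / k)).image fun h : ℕ => i + ((h * k : ℕ) : ZMod n)

/-- The cyclic closed interval `[a,b]_n` of `ℤ_n`. -/
def cycInterval (n : ℕ) (a b : ZMod n) : Finset (ZMod n) :=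
  (Finset.range ((b - a).val + 1)).image fun h : ℕ => a + (h : ZMod n)

/-- The inequality `a·x ≥ α` is valid for `Q(C_n^k)`. -/
def IsValid (n k : ℕ) (a : ZMod n → ℤ) (α : ℤ) : Prop :=
  ∀ x : Finset (ZMod n), IsCover n k x → α ≤ ∑ i ∈ x, a i

/-- A root of a valid inequality: a cover satisfying it with equality. -/
def IsRoot (n k : ℕ) (a : ZMod n → ℤ) (α : ℤ) (x : Finset (ZMod n)) : Prop :=
  IsCover n k x ∧ ∑ i ∈ x, a i = α

/-- Characteristic vector of a subset of `ℤ_n`. -/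
noncomputable def charVec (n : ℕ) (x : Finset (ZMod n)) : ZMod n → ℝ :=
  fun i => if i ∈ x then 1 else 0

/-- `a·x ≥ α` is facet defining for `Q(C_n^k)`: it is valid, and the characteristic
vectors of its roots affinely span an `(n−1)`-dimensional affine subspace of `ℝ^n`. -/
def IsFacet (n k : ℕ) (a : ZMod n → ℤ) (α : ℤ) : Prop :=
  IsValid n k a α ∧
    Module.finrank ℝ
      (affineSpan ℝ
        {v : ZMod n → ℝ | ∃ x : Finset (ZMod n), IsRoot n k a α x ∧ v = charVec n x}).direction
      = n - 1

/-- `a·x ≥ α` is a positive multiple of one of the boolean inequalities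
`x_i ≥ 0`, `−x_i ≥ −1`, `∑_{j ∈ C^i} x_j ≥ 1`. -/
def IsBooleanMultiple (n k : ℕ) (a : ZMod n → ℤ) (α : ℤ) : Prop :=
  ∃ c : ℤ, 0 < c ∧
    ( (∃ i : ZMod n, (∀ j, a j = if j = i then c else 0) ∧ α = 0)
    ∨ (∃ i : ZMod n, (∀ j, a j = if j = i then -c else 0) ∧ α = -c)
    ∨ (∃ i : ZMod n, (∀ j, a j = if j ∈ Cseg n k i then c else 0) ∧ α = c) )

/-- `a·x ≥ α` is a positive multiple of the rank constraint `∑ x_i ≥ ⌈n/k⌉`. -/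
def IsRankMultiple (n k : ℕ) (a : ZMod n → ℤ) (α : ℤ) : Prop :=
  ∃ c : ℤ, 0 < c ∧ (∀ j, a j = c) ∧ α = c * (((n + k - 1) / k : ℕ) : ℤ)

lemma mem_Cseg_iff {n k : ℕ} [NeZero n] (hk : k ≤ n) (i j : ZMod n) :
    j ∈ Cseg n k i ↔ (j - i).val < k := by
  constructor
  · intro hj
    simp only [Cseg, Finset.mem_image, Finset.mem_range] at hj
    obtain ⟨h, hh, rfl⟩ := hj
    rw [add_sub_cancel_left, ZMod.val_cast_of_lt (lt_of_lt_of_le hh hk)]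
    exact hh
  · intro h
    simp only [Cseg, Finset.mem_image, Finset.mem_range]
    refine ⟨(j - i).val, h, ?_⟩
    rw [ZMod.natCast_val, ZMod.cast_id]
    ring

lemma loc_lemma {s k : ℕ} (hk : 0 < k) [NeZero (s*k)] {c : ZMod (s*k)} {t : ℕ} (ht : t < s)
    (h : (c - ((t*k : ℕ) : ZMod (s*k))).val < k) :
    c.val = t*k + (c - ((t*k:ℕ) : ZMod (s*k))).val := by
  set r := (c - ((t*k:ℕ) : ZMod (s*k))).val with hr
  have hc : c = ((t*k + r : ℕ) : ZMod (s*k)) := by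
    push_cast
    rw [hr, ZMod.natCast_val, ZMod.cast_id, Nat.cast_mul]
    ring
  have hlt : t*k + r < s*k := by nlinarith
  rw [hc, ZMod.val_cast_of_lt hlt]

lemma cover_blocks {s k : ℕ} (hk : 0 < k) [NeZero (s*k)]
    {x : Finset (ZMod (s*k))} (hx : IsCover (s*k) k x) (i : ZMod (s*k))
    {t : ℕ} (ht : t < s) :
    ∃ j ∈ x, (j - i).val / k = t := by
  have hs : 0 < s := lt_of_le_of_lt (Nat.zero_le t) ht
  have hkn : k ≤ s * k := Nat.le_mul_of_pos_left k hs
  obtain ⟨j, hj⟩ := hx (i + ((t*k : ℕ) : ZMod (s*k)))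
  rw [Finset.mem_inter, mem_Cseg_iff hkn] at hj
  refine ⟨j, hj.1, ?_⟩
  have h1 : j - (i + ((t*k : ℕ) : ZMod (s*k))) = (j - i) - ((t*k : ℕ) : ZMod (s*k)) := by ring
  rw [h1] at hj
  have h2 := loc_lemma hk ht hj.2
  rw [h2, Nat.add_comm, Nat.add_mul_div_right _ _ hk,
    Nat.div_eq_of_lt hj.2]
  omega

lemma cover_card_ge {s k : ℕ} (hk : 0 < k) [NeZero (s*k)]
    {x : Finset (ZMod (s*k))} (hx : IsCover (s*k) k x) : s ≤ x.card := by
  have hsub : Finset.range s ⊆ x.image (fun j => (j - 0).val / k) := by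
    intro t ht
    rw [Finset.mem_range] at ht
    obtain ⟨j, hj, hjt⟩ := cover_blocks hk hx 0 ht
    exact Finset.mem_image.mpr ⟨j, hj, hjt⟩
  calc s = (Finset.range s).card := (Finset.card_range s).symm
    _ ≤ (x.image (fun j => (j - 0).val / k)).card := Finset.card_le_card hsub
    _ ≤ x.card := Finset.card_image_le

lemma cover_struct {s k : ℕ} (hs : 2 ≤ s) (hk : 0 < k)
    {x : Finset (ZMod (s*k))} (hx : IsCover (s*k) k x) (hcard : x.card = s)
    {i : ZMod (s*k)} (hi : i ∈ x) : x = xcov (s*k) k i := by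
  have hn : 0 < s * k := Nat.mul_pos (by omega) hk
  haveI : NeZero (s*k) := ⟨hn.ne'⟩
  set f : ZMod (s*k) → ℕ := fun j => (j - i).val / k with hf
  -- image of x under f is range s
  have himg : x.image f = Finset.range s := by
    apply Finset.Subset.antisymm
    · intro t ht
      rw [Finset.mem_image] at ht
      obtain ⟨j, hj, rfl⟩ := ht
      rw [Finset.mem_range, hf]
      exact (Nat.div_lt_iff_lt_mul hk).mpr (j - i).val_lt
    · intro t ht
      rw [Finset.mem_range] at ht
      obtain ⟨j, hj, hjt⟩ := cover_blocks hk hx i ht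
      exact Finset.mem_image.mpr ⟨j, hj, hjt⟩
  have hinj : Set.InjOn f ↑x := by
    rw [← Finset.card_image_iff (f := f) (s := x), himg, Finset.card_range, hcard]
  -- inductive claim
  have hmem : ∀ t, t < s → i + ((t*k : ℕ) : ZMod (s*k)) ∈ x := by
    intro t
    induction t with
    | zero => intro _; simpa using hi
    | succ t ih =>
      intro hts
      have ht : t < s := by omega
      have hjt : i + ((t*k : ℕ) : ZMod (s*k)) ∈ x := ih (by omega)
      -- window starting at i + (t*k+1)
      have hkn : k ≤ s * k := Nat.le_mul_of_pos_left k (by omega)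
      obtain ⟨j, hj⟩ := hx (i + ((t*k+1 : ℕ) : ZMod (s*k)))
      rw [Finset.mem_inter, mem_Cseg_iff hkn] at hj
      set r := (j - (i + ((t*k+1 : ℕ) : ZMod (s*k)))).val with hrdef
      have hr : r < k := hj.2
      have hjeq : j = i + ((t*k+1+r : ℕ) : ZMod (s*k)) := by
        have : ((r : ℕ) : ZMod (s*k)) = j - (i + ((t*k+1 : ℕ) : ZMod (s*k))) := by
          rw [hrdef, ZMod.natCast_val, ZMod.cast_id]
        push_cast
        push_cast at this
        linear_combination -this
      have hlt : t*k+1+r < s*k := by nlinarith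
      have hdj : (j - i).val = t*k+1+r := by
        rw [hjeq]
        rw [add_sub_cancel_left, ZMod.val_cast_of_lt hlt]
      rcases Nat.lt_or_ge r (k-1) with hrk | hrk
      · -- contradiction with injectivity
        exfalso
        have hfj : f j = t := by
          rw [hf]
          simp only
          rw [hdj, show t*k+1+r = (1+r) + t*k by ring, Nat.add_mul_div_right _ _ hk,
            Nat.div_eq_of_lt (by omega)]
          omega
        have hfjt : f (i + ((t*k : ℕ) : ZMod (s*k))) = t := by
          rw [hf]
          simp only
          rw [add_sub_cancel_left, ZMod.val_cast_of_lt (by nlinarith : t*k < s*k),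
            Nat.mul_div_cancel _ hk]
        have := hinj hj.1 hjt (by rw [hfj, hfjt])
        rw [this] at hdj
        rw [add_sub_cancel_left, ZMod.val_cast_of_lt (by nlinarith : t*k < s*k)] at hdj
        omega
      · have hreq : r = k - 1 := by omega
        have : t*k+1+r = (t+1)*k := by
          rw [hreq]; cases k with | zero => omega | succ k => ring_nf; omega
        rw [this] at hjeq
        rw [← hjeq]; exact hj.1
  -- conclude
  have hm : (s * k + k - 1) / k = s := by
    rw [show s*k + k - 1 = (k-1) + s*k by omega, Nat.add_mul_div_right _ _ hk,
      Nat.div_eq_of_lt (by omega)]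
    omega
  have hsub : xcov (s*k) k i ⊆ x := by
    intro j hj
    rw [xcov, hm, Finset.mem_image] at hj
    obtain ⟨t, ht, rfl⟩ := hj
    exact hmem t (Finset.mem_range.mp ht)
  have hcardx : (xcov (s*k) k i).card = s := by
    rw [xcov, hm]
    rw [Finset.card_image_of_injOn ?_, Finset.card_range]
    intro t1 h1 t2 h2 he
    simp only [Finset.coe_range, Set.mem_Iio] at h1 h2
    have he2 : ((t1*k : ℕ) : ZMod (s*k)) = ((t2*k : ℕ) : ZMod (s*k)) := by
      exact add_left_cancel he
    have v1 : t1 * k < s * k := by nlinarith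
    have v2 : t2 * k < s * k := by nlinarith
    have := congrArg ZMod.val he2
    rw [ZMod.val_cast_of_lt v1, ZMod.val_cast_of_lt v2] at this
    exact Nat.eq_of_mul_eq_mul_right hk this
  exact (Finset.eq_of_subset_of_card_le hsub (by omega)).symm


theorem stmt8 (s k : ℕ) (hs : 2 ≤ s) (hk : 3 ≤ k)
    (W : Finset (ZMod (s * k))) (hWne : W.Nonempty) (hWproper : ∃ i : ZMod (s * k), i ∉ W)
    (a : ZMod (s * k) → ℤ) (a0 : ℤ) (ha0 : 1 ≤ a0)
    (ha : ∀ i ∈ W, a0 + 1 ≤ a i ∧ a i ≤ 2 * a0)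
    (hvalid : IsValid (s * k) k (fun i => if i ∈ W then a i else a0) (((s : ℤ) + 1) * a0))
    (x : Finset (ZMod (s * k)))
    (hroot : IsRoot (s * k) k (fun i => if i ∈ W then a i else a0) (((s : ℤ) + 1) * a0) x) :
    (x.card = s ∨ x.card = s + 1) ∧
    ((∃ i ∈ x, i ∈ W) ↔ x.card = s) ∧
    (∀ i ∈ x, i ∈ W → x = xcov (s * k) k i) := by
  have hk0 : 0 < k := by omega
  have hn : 0 < s * k := Nat.mul_pos (by omega) hk0
  haveI : NeZero (s * k) := ⟨hn.ne'⟩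
  obtain ⟨hcov, hsum⟩ := hroot
  -- card lower bound
  have hcl : s ≤ x.card := cover_card_ge hk0 hcov
  -- split the sum
  set T : Finset (ZMod (s * k)) := x.filter (· ∈ W) with hT
  have hsplit : ∑ i ∈ x, (if i ∈ W then a i else a0)
      = (x.card : ℤ) * a0 + ∑ i ∈ T, (a i - a0) := by
    have h1 : ∀ i ∈ x, (if i ∈ W then a i else a0)
        = a0 + (if i ∈ W then a i - a0 else 0) := by
      intro i _; split <;> ring
    rw [Finset.sum_congr rfl h1, Finset.sum_add_distrib, Finset.sum_const,
      ← Finset.sum_filter]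
    simp [mul_comm]
    rfl
  rw [hsplit] at hsum
  have hTterms : ∀ i ∈ T, (1:ℤ) ≤ a i - a0 := by
    intro i hi
    rw [hT, Finset.mem_filter] at hi
    have := (ha i hi.2).1
    omega
  have hTlb : (T.card : ℤ) ≤ ∑ i ∈ T, (a i - a0) := by
    calc (T.card : ℤ) = T.card • (1:ℤ) := by simp
      _ ≤ ∑ i ∈ T, (a i - a0) := Finset.card_nsmul_le_sum T _ _ hTterms
  -- card upper bound
  have hTnonneg : (0:ℤ) ≤ ∑ i ∈ T, (a i - a0) := le_trans (by positivity) hTlb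
  have hcu : x.card ≤ s + 1 := by
    by_contra hcon
    push_neg at hcon
    have h1 : ((s:ℤ) + 2) ≤ (x.card : ℤ) := by exact_mod_cast hcon
    nlinarith
  have hiff : (∃ i ∈ x, i ∈ W) ↔ x.card = s := by
    constructor
    · rintro ⟨i, hix, hiW⟩
      have hiT : i ∈ T := Finset.mem_filter.mpr ⟨hix, hiW⟩
      have hT1 : 1 ≤ T.card := Finset.card_pos.mpr ⟨i, hiT⟩
      have h1 : (1:ℤ) ≤ (T.card : ℤ) := by exact_mod_cast hT1
      by_contra hne
      have hxc : x.card = s + 1 := by omega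
      rw [hxc] at hsum
      push_cast at hsum
      nlinarith
    · intro hxc
      rw [hxc] at hsum
      have hTsum : ∑ i ∈ T, (a i - a0) = a0 := by push_cast at hsum ⊢; linarith
      have hTne : T.Nonempty := by
        by_contra hTe
        rw [Finset.not_nonempty_iff_eq_empty] at hTe
        rw [hTe, Finset.sum_empty] at hTsum
        omega
      obtain ⟨i, hiT⟩ := hTne
      rw [hT, Finset.mem_filter] at hiT
      exact ⟨i, hiT.1, hiT.2⟩
  refine ⟨by omega, hiff, ?_⟩
  intro i hix hiW
  exact cover_struct hs hk0 hcov (hiff.mp ⟨i, hix, hiW⟩) hix
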